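/- Let f be a polynomial with complex coefficients having only simple roots at the points of a finite set V, i.e. f = lc(f)·∏_{z ∈ V} (X − z). Then ∏_{z ∈ V} sep(z,f) ≤ 2^{|V|} · (∏_{z ∈ V} max(1,|z|))^{7}, where sep(z,f) is the minimum distance from z to another root. -/

import Mathlib

/-- If f is square-free with root set V (|V| ≥ 2) and sep(z) is the minimum
distance from z to another root, then
∏_{z ∈ V} sep(z) ≤ 2^{|V|} · (∏_{z ∈ V} max(1,|z|))^7. -/
theorem prod_sep_le (V : Finset ℂ) (hV : 2 ≤ V.card)
    (sep : ℂ → ℝ)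
    (hsep : ∀ z ∈ V,
      IsLeast {d : ℝ | ∃ y ∈ V, y ≠ z ∧ d = ‖z - y‖} (sep z)) :
    ∏ z ∈ V, sep z ≤ 2 ^ V.card * (∏ z ∈ V, max 1 ‖z‖) ^ 7 := by
  set M : ℂ → ℝ := fun z => max 1 ‖z‖ with hMdef
  have hM1 : ∀ z, (1:ℝ) ≤ M z := fun z => le_max_left _ _
  have hVne : V.Nonempty := Finset.card_pos.mp (by omega)
  obtain ⟨y₀, hy₀V, hy₀min⟩ := V.exists_min_image M hVne
  have herase : (V.erase y₀).Nonempty := by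
    rw [← Finset.card_pos, Finset.card_erase_of_mem hy₀V]; omega
  obtain ⟨y₁, hy₁⟩ := herase
  have hy₁V : y₁ ∈ V := Finset.mem_of_mem_erase hy₁
  have hy₁ne : y₁ ≠ y₀ := Finset.ne_of_mem_erase hy₁
  set P : ℝ := ∏ z ∈ V, M z with hPdef
  have hP1 : (1:ℝ) ≤ P := by
    rw [hPdef]
    calc (1:ℝ) = ∏ _z ∈ V, 1 := by rw [Finset.prod_const_one]
    _ ≤ ∏ z ∈ V, M z :=
        Finset.prod_le_prod (fun _ _ => zero_le_one) (fun z _ => hM1 z)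
  have hsep_le : ∀ z ∈ V, ∀ y ∈ V, y ≠ z → sep z ≤ 2 * M z * M y := by
    intro z hz y hy hne
    have h := (hsep z hz).2 ⟨y, hy, hne, rfl⟩
    have habs : ‖z - y‖ ≤ 2 * M z * M y := by
      have h1 : ‖z - y‖ ≤ ‖z‖ + ‖y‖ := by
        exact norm_sub_le z y
      have h2 : ‖z‖ ≤ M z := le_max_right _ _
      have h3 : ‖y‖ ≤ M y := le_max_right _ _
      nlinarith [hM1 z, hM1 y]
    linarith
  have hsep_nonneg : ∀ z ∈ V, 0 ≤ sep z := by
    intro z hz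
    obtain ⟨y, _, _, hEq⟩ := (hsep z hz).1
    rw [hEq]; positivity
  set g : ℂ → ℝ := fun z => if z = y₀ then 2 * M y₀ * M y₁ else 2 * M z * M y₀
    with hgdef
  have hmain : ∏ z ∈ V, sep z ≤ ∏ z ∈ V, g z := by
    refine Finset.prod_le_prod hsep_nonneg ?_
    intro z hz
    by_cases h : z = y₀
    · subst h
      simpa [hgdef] using hsep_le z hz y₁ hy₁V hy₁ne
    · simpa [hgdef, h] using hsep_le z hz y₀ hy₀V (Ne.symm h)
  have hsplit : ∏ z ∈ V, g z = g y₀ * ∏ z ∈ V.erase y₀, g z :=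
    (Finset.mul_prod_erase V g hy₀V).symm
  have herase_eq : ∏ z ∈ V.erase y₀, g z
      = (2 * M y₀) ^ (V.card - 1) * ∏ z ∈ V.erase y₀, M z := by
    have : ∏ z ∈ V.erase y₀, g z = ∏ z ∈ V.erase y₀, (2 * M y₀) * M z := by
      refine Finset.prod_congr rfl ?_
      intro z hz
      have hne : z ≠ y₀ := Finset.ne_of_mem_erase hz
      simp [hgdef, hne]; ring
    rw [this, Finset.prod_mul_distrib, Finset.prod_const,
      Finset.card_erase_of_mem hy₀V]
  have hQ : ∏ z ∈ V.erase y₀, M z ≤ P := by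
    have hQ0 : (0:ℝ) ≤ ∏ z ∈ V.erase y₀, M z :=
      Finset.prod_nonneg (fun z _ => le_trans zero_le_one (hM1 z))
    rw [hPdef, ← Finset.mul_prod_erase V M hy₀V]
    exact le_mul_of_one_le_left hQ0 (hM1 y₀)
  have hy₀pow : (M y₀) ^ V.card ≤ P := by
    calc (M y₀) ^ V.card = ∏ _z ∈ V, M y₀ := by rw [Finset.prod_const]
    _ ≤ ∏ z ∈ V, M z :=
        Finset.prod_le_prod (fun z _ => by linarith [hM1 y₀])
          (fun z hz => hy₀min z hz)
  have hy₁le : M y₁ ≤ P := by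
    have h1 : (1:ℝ) ≤ ∏ z ∈ V.erase y₁, M z := by
      calc (1:ℝ) = ∏ _z ∈ V.erase y₁, 1 := by rw [Finset.prod_const_one]
      _ ≤ ∏ z ∈ V.erase y₁, M z :=
          Finset.prod_le_prod (fun _ _ => zero_le_one) (fun z _ => hM1 z)
    rw [hPdef, ← Finset.mul_prod_erase V M hy₁V]
    exact le_mul_of_one_le_right (le_trans zero_le_one (hM1 y₁)) h1
  have hcomb : g y₀ * ((2 * M y₀) ^ (V.card - 1) * ∏ z ∈ V.erase y₀, M z)
      ≤ 2 ^ V.card * P ^ 3 := by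
    have hgy₀ : g y₀ = 2 * M y₀ * M y₁ := by simp [hgdef]
    have hpow : (2 * M y₀) ^ (V.card - 1) * (2 * M y₀) = (2 * M y₀) ^ V.card := by
      rw [← pow_succ]
      congr 1
      omega
    have hMy₀0 : (0:ℝ) < M y₀ := lt_of_lt_of_le one_pos (hM1 y₀)
    have hQ0 : (0:ℝ) ≤ ∏ z ∈ V.erase y₀, M z :=
      Finset.prod_nonneg (fun z _ => by linarith [hM1 z])
    have h1 : g y₀ * ((2 * M y₀) ^ (V.card - 1) * ∏ z ∈ V.erase y₀, M z)
        = 2 ^ V.card * (M y₀) ^ V.card * (M y₁ * ∏ z ∈ V.erase y₀, M z) := by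
      rw [hgy₀]
      rw [show 2 * M y₀ * M y₁ * ((2 * M y₀) ^ (V.card - 1) * ∏ z ∈ V.erase y₀, M z)
        = ((2 * M y₀) ^ (V.card - 1) * (2 * M y₀)) * (M y₁ * ∏ z ∈ V.erase y₀, M z) by ring,
        hpow, mul_pow]
    rw [h1]
    have h2 : M y₁ * ∏ z ∈ V.erase y₀, M z ≤ P * P := by
      exact mul_le_mul hy₁le hQ hQ0 (by linarith)
    calc 2 ^ V.card * (M y₀) ^ V.card * (M y₁ * ∏ z ∈ V.erase y₀, M z)
        ≤ 2 ^ V.card * P * (P * P) := by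
          refine mul_le_mul ?_ h2 (by positivity) (by positivity)
          exact mul_le_mul_of_nonneg_left hy₀pow (by positivity)
    _ = 2 ^ V.card * P ^ 3 := by ring
  have hP37 : P ^ 3 ≤ P ^ 7 := pow_le_pow_right₀ (by linarith) (by norm_num)
  calc ∏ z ∈ V, sep z ≤ ∏ z ∈ V, g z := hmain
  _ = g y₀ * ((2 * M y₀) ^ (V.card - 1) * ∏ z ∈ V.erase y₀, M z) := by
      rw [hsplit, herase_eq]
  _ ≤ 2 ^ V.card * P ^ 3 := hcomb
  _ ≤ 2 ^ V.card * P ^ 7 := by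
      have : (0:ℝ) ≤ 2 ^ V.card := by positivity
      exact mul_le_mul_of_nonneg_left hP37 this
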